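/- Let m, n ≥ 1 and let B¹,…,Bⁿ be m×m real matrices, each skew-symmetric and orthogonal, with BⁱBʲ = −BʲBⁱ for i ≠ j. Let d(x,t) = (‖x‖⁴ + 16‖t‖²)^{1/4} on ℝᵐ × ℝⁿ and let A = (a_{ij}) be an m×m symmetric matrix-valued function. Then for every p = (x,t) ≠ (0,0), L_A d(p) = (1/d(p)) ⟨(Tr(A(p))·I_m − 3A(p)) ∇_H d(p), ∇_H d(p)⟩ + (2/d(p)³) ( ⟨A(p)x, x⟩ + Σ_{k=1}^n ⟨A(p)Bᵏx, Bᵏx⟩ ), where L_A u = Σ_{i,j=1}^m a_{ij} X_iX_j u, X_j u(x,t) = ∂_{x_j}u(x,t) + ½Σ_{k=1}^n (Bᵏx)_j ∂_{t_k}u(x,t), and ∇_H d = (X₁d,…,X_m d). -/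

import Mathlib

open Matrix MeasureTheory
open scoped BigOperators

noncomputable section

/-- The underlying space of the prototype H-type group: `ℝᵐ × ℝⁿ`. -/
abbrev G (m n : ℕ) : Type := (Fin m → ℝ) × (Fin n → ℝ)

/-- Squared Euclidean norm on `ℝᵏ`. -/
def sqnorm {k : ℕ} (x : Fin k → ℝ) : ℝ := ∑ i, x i ^ 2

/-- The homogeneous norm `d(x,t) = (‖x‖⁴ + 16‖t‖²)^(1/4)`. -/
def hnorm {m n : ℕ} (p : G m n) : ℝ := (sqnorm p.1 ^ 2 + 16 * sqnorm p.2) ^ (4⁻¹ : ℝ)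

/-- The group law `(x,t)∘(y,s) = (x+y, t+s+½⟨Bᵏx,y⟩)`. -/
def gmul {m n : ℕ} (B : Fin n → Matrix (Fin m) (Fin m) ℝ) (p q : G m n) : G m n :=
  (p.1 + q.1, fun k => p.2 k + q.2 k + (1 / 2) * ((B k).mulVec p.1 ⬝ᵥ q.1))

/-- The group inverse `p⁻¹ = -p`. -/
def ginv {m n : ℕ} (p : G m n) : G m n := (-p.1, -p.2)

/-- The `d`-ball `B_R(p) = {q : d(p⁻¹∘q) < R}`. -/
def dball {m n : ℕ} (B : Fin n → Matrix (Fin m) (Fin m) ℝ) (p : G m n) (R : ℝ) :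
    Set (G m n) := {q | hnorm (gmul B (ginv p) q) < R}

/-- The vector of the horizontal field `X_j` at `p`:
`X_j = ∂_{x_j} + ½ Σ_k (Bᵏx)_j ∂_{t_k}`. -/
def Xvec {m n : ℕ} (B : Fin n → Matrix (Fin m) (Fin m) ℝ) (j : Fin m) (p : G m n) : G m n :=
  (fun i => if i = j then 1 else 0, fun k => (1 / 2) * (B k).mulVec p.1 j)

/-- The horizontal derivative `X_j u (p)`. -/
def Xop {m n : ℕ} (B : Fin n → Matrix (Fin m) (Fin m) ℝ) (j : Fin m) (u : G m n → ℝ)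
    (p : G m n) : ℝ := fderiv ℝ u p (Xvec B j p)

/-- The horizontally elliptic operator `L_A u = Σ_{i,j} a_{ij} X_i X_j u`. -/
def Lop {m n : ℕ} (B : Fin n → Matrix (Fin m) (Fin m) ℝ)
    (A : G m n → Matrix (Fin m) (Fin m) ℝ) (u : G m n → ℝ) (p : G m n) : ℝ :=
  ∑ i, ∑ j, A p i j * Xop B i (Xop B j u) p

/-- The defining conditions on the matrices `B¹,…,Bⁿ` of a prototype H-type group:
skew-symmetric, orthogonal, pairwise anticommuting. -/
def HTypeData {m n : ℕ} (B : Fin n → Matrix (Fin m) (Fin m) ℝ) : Prop :=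
  (∀ k, (B k)ᵀ = -(B k)) ∧ (∀ k, (B k)ᵀ * B k = 1) ∧
    (∀ i j, i ≠ j → B i * B j = -(B j * B i))

/-- The quadratic form `⟨Aξ, ξ⟩`. -/
def quadForm {m : ℕ} (A : Matrix (Fin m) (Fin m) ℝ) (ξ : Fin m → ℝ) : ℝ :=
  A.mulVec ξ ⬝ᵥ ξ

/-- Uniform ellipticity: `λ‖ξ‖² ≤ ⟨Aξ,ξ⟩ ≤ Λ‖ξ‖²`. -/
def UnifElliptic {m : ℕ} (lam Lam : ℝ) (A : Matrix (Fin m) (Fin m) ℝ) : Prop :=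
  ∀ ξ : Fin m → ℝ, lam * sqnorm ξ ≤ quadForm A ξ ∧ quadForm A ξ ≤ Lam * sqnorm ξ

/-- The δ-Landis condition
`Tr(A) + (Q+2−m)·max_{‖ξ‖=1}⟨Aξ,ξ⟩ ≤ (Q+4−δ)·min_{‖ξ‖=1}⟨Aξ,ξ⟩`,
stated equivalently via universal quantification over unit vectors. -/
def Landis {m : ℕ} (Q δ : ℝ) (A : Matrix (Fin m) (Fin m) ℝ) : Prop :=
  ∀ ξ ζ : Fin m → ℝ, sqnorm ξ = 1 → sqnorm ζ = 1 →
    A.trace + (Q + 2 - m) * quadForm A ξ ≤ (Q + 4 - δ) * quadForm A ζ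

/-- `φ = d⁴`. -/
def phi {m n : ℕ} (p : G m n) : ℝ := sqnorm p.1 ^ 2 + 16 * sqnorm p.2


variable {m n : ℕ}

/-- coordinate functional on first component -/
def xco (i : Fin m) : G m n →L[ℝ] ℝ :=
  (ContinuousLinearMap.proj i).comp (ContinuousLinearMap.fst ℝ (Fin m → ℝ) (Fin n → ℝ))
def tco (k : Fin n) : G m n →L[ℝ] ℝ :=
  (ContinuousLinearMap.proj k).comp (ContinuousLinearMap.snd ℝ (Fin m → ℝ) (Fin n → ℝ))

@[simp] lemma xco_apply (i : Fin m) (v : G m n) : xco (n := n) i v = v.1 i := rfl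
@[simp] lemma tco_apply (k : Fin n) (v : G m n) : tco (m := m) k v = v.2 k := rfl

lemma hasFDerivAt_xco (i : Fin m) (p : G m n) :
    HasFDerivAt (fun q : G m n => q.1 i) (xco (n := n) i) p :=
  (xco (n := n) i).hasFDerivAt

lemma hasFDerivAt_tco (k : Fin n) (p : G m n) :
    HasFDerivAt (fun q : G m n => q.2 k) (tco (m := m) k) p :=
  (tco (m := m) k).hasFDerivAt

def D1 (p : G m n) : G m n →L[ℝ] ℝ := ∑ i, (2 * p.1 i) • xco i

lemma hasFDerivAt_sq1 (p : G m n) :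
    HasFDerivAt (fun q : G m n => sqnorm q.1) (D1 p) p := by
  have h : ∀ i : Fin m, HasFDerivAt (fun q : G m n => q.1 i ^ 2)
      ((2 * p.1 i) • xco (n := n) i) p := by
    intro i
    have := (hasFDerivAt_xco (n := n) i p).mul (hasFDerivAt_xco (n := n) i p)
    simp only [pow_two, two_mul, add_smul]
    exact this
  simpa [sqnorm, D1] using HasFDerivAt.fun_sum (fun i (_ : i ∈ Finset.univ) => h i)

def D2 (p : G m n) : G m n →L[ℝ] ℝ := ∑ k, (2 * p.2 k) • tco k

lemma hasFDerivAt_sq2 (p : G m n) :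
    HasFDerivAt (fun q : G m n => sqnorm q.2) (D2 p) p := by
  have h : ∀ k : Fin n, HasFDerivAt (fun q : G m n => q.2 k ^ 2)
      ((2 * p.2 k) • tco (m := m) k) p := by
    intro k
    have := (hasFDerivAt_tco (m := m) k p).mul (hasFDerivAt_tco (m := m) k p)
    simp only [pow_two, two_mul, add_smul]
    exact this
  simpa [sqnorm, D2] using HasFDerivAt.fun_sum (fun k (_ : k ∈ Finset.univ) => h k)

def Dphi (p : G m n) : G m n →L[ℝ] ℝ := (2 * sqnorm p.1) • D1 p + (16 : ℝ) • D2 p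

lemma hasFDerivAt_phi (p : G m n) : HasFDerivAt (phi (m := m) (n := n)) (Dphi p) p := by
  have h1 : HasFDerivAt (fun q : G m n => sqnorm q.1 ^ 2) ((2 * sqnorm p.1) • D1 p) p := by
    have := (hasFDerivAt_sq1 p).mul (hasFDerivAt_sq1 p)
    simp only [pow_two, two_mul, add_smul]
    exact this
  have h2 : HasFDerivAt (fun q : G m n => 16 * sqnorm q.2) ((16 : ℝ) • D2 p) p :=
    (hasFDerivAt_sq2 p).const_mul 16
  exact h1.fun_add h2

lemma Dphi_apply (p v : G m n) :
    Dphi p v = 4 * sqnorm p.1 * ∑ i, p.1 i * v.1 i + 32 * ∑ k, p.2 k * v.2 k := by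
  simp only [Dphi, D1, D2, ContinuousLinearMap.add_apply, ContinuousLinearMap.smul_apply,
    ContinuousLinearMap.sum_apply, xco_apply, tco_apply, smul_eq_mul]
  rw [Finset.mul_sum, Finset.mul_sum, Finset.mul_sum, Finset.mul_sum]
  congr 1 <;> exact Finset.sum_congr rfl fun i _ => by ring

variable (B : Fin n → Matrix (Fin m) (Fin m) ℝ)

lemma sqnorm_nonneg {k : ℕ} (x : Fin k → ℝ) : 0 ≤ sqnorm x :=
  Finset.sum_nonneg fun i _ => sq_nonneg _

lemma sqnorm_eq_zero {k : ℕ} {x : Fin k → ℝ} (h : sqnorm x = 0) : x = 0 := by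
  funext i
  have := (Finset.sum_eq_zero_iff_of_nonneg (fun i _ => sq_nonneg (x i))).1 h i (Finset.mem_univ i)
  exact pow_eq_zero_iff (by norm_num) |>.1 this

lemma phi_pos {p : G m n} (hp : p ≠ 0) : 0 < phi p := by
  rcases lt_or_eq_of_le (sqnorm_nonneg p.1) with h1 | h1
  · have : 0 < sqnorm p.1 ^ 2 := by positivity
    have := sqnorm_nonneg p.2
    unfold phi; nlinarith
  · rcases lt_or_eq_of_le (sqnorm_nonneg p.2) with h2 | h2
    · unfold phi; nlinarith
    · exfalso
      exact hp (Prod.ext (sqnorm_eq_zero h1.symm) (sqnorm_eq_zero h2.symm))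

/-- the function `g_j`. -/
def gv (p : G m n) (j : Fin m) : ℝ :=
  sqnorm p.1 * p.1 j + 4 * ∑ k, p.2 k * (B k).mulVec p.1 j

lemma hnorm_eq (p : G m n) : hnorm p = phi p ^ (4⁻¹ : ℝ) := rfl

lemma hasFDerivAt_hnorm {p : G m n} (hp : p ≠ 0) :
    HasFDerivAt (hnorm (m := m) (n := n))
      ((4⁻¹ * phi p ^ ((4⁻¹ : ℝ) - 1)) • Dphi p) p :=
  (hasFDerivAt_phi p).rpow_const (Or.inl (phi_pos hp).ne')

lemma Dphi_Xvec (p : G m n) (i : Fin m) : Dphi p (Xvec B i p) = 4 * gv B p i := by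
  rw [Dphi_apply, gv]
  have h1 : ∑ l, p.1 l * (Xvec B i p).1 l = p.1 i := by
    simp [Xvec, Finset.sum_ite_eq]
  have h2 : ∑ k, p.2 k * (Xvec B i p).2 k = 1/2 * ∑ k, p.2 k * (B k).mulVec p.1 i := by
    rw [Finset.mul_sum]
    exact Finset.sum_congr rfl fun k _ => by simp [Xvec]; ring
  rw [h1, h2]; ring

lemma Xop_hnorm {p : G m n} (hp : p ≠ 0) (j : Fin m) :
    Xop B j hnorm p = phi p ^ ((4⁻¹ : ℝ) - 1) * gv B p j := by
  rw [Xop, (hasFDerivAt_hnorm hp).fderiv]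
  rw [ContinuousLinearMap.smul_apply, Dphi_Xvec, smul_eq_mul]
  ring

/-- the linear map `v ↦ (M v.1) j` -/
def mvL (M : Matrix (Fin m) (Fin m) ℝ) (j : Fin m) : G m n →L[ℝ] ℝ := ∑ i, M j i • xco i

@[simp] lemma mvL_apply (M : Matrix (Fin m) (Fin m) ℝ) (j : Fin m) (v : G m n) :
    mvL (n := n) M j v = M.mulVec v.1 j := by
  simp [mvL, Matrix.mulVec, dotProduct]

lemma hasFDerivAt_mv (M : Matrix (Fin m) (Fin m) ℝ) (j : Fin m) (p : G m n) :
    HasFDerivAt (fun q : G m n => M.mulVec q.1 j) (mvL (n := n) M j) p := by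
  have : (fun q : G m n => M.mulVec q.1 j) = ⇑(mvL (n := n) M j) := by
    funext q; simp
  rw [this]
  exact (mvL (n := n) M j).hasFDerivAt

def Dgv (p : G m n) (j : Fin m) : G m n →L[ℝ] ℝ :=
  (sqnorm p.1 • xco j + p.1 j • D1 p) +
    (4 : ℝ) • ∑ k, (p.2 k • mvL (B k) j + ((B k).mulVec p.1 j) • tco k)

lemma hasFDerivAt_gv (p : G m n) (j : Fin m) :
    HasFDerivAt (fun q => gv B q j) (Dgv B p j) p := by
  have h1 : HasFDerivAt (fun q : G m n => sqnorm q.1 * q.1 j)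
      (sqnorm p.1 • xco j + p.1 j • D1 p) p :=
    (hasFDerivAt_sq1 p).mul (hasFDerivAt_xco j p)
  have h2 : HasFDerivAt (fun q : G m n => 4 * ∑ k, q.2 k * (B k).mulVec q.1 j)
      ((4 : ℝ) • ∑ k, (p.2 k • mvL (B k) j + ((B k).mulVec p.1 j) • tco k)) p := by
    refine HasFDerivAt.const_mul ?_ 4
    exact HasFDerivAt.fun_sum fun k _ => (hasFDerivAt_tco k p).mul (hasFDerivAt_mv (B k) j p)
  exact h1.add h2

lemma Dgv_Xvec (p : G m n) (i j : Fin m) :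
    Dgv B p j (Xvec B i p) =
      sqnorm p.1 * (if j = i then 1 else 0) + 2 * (p.1 i * p.1 j) +
        4 * ∑ k, p.2 k * B k j i + 2 * ∑ k, (B k).mulVec p.1 i * (B k).mulVec p.1 j := by
  have hx : ∀ l : Fin m, (Xvec B i p).1 l = if l = i then 1 else 0 := fun l => rfl
  have ht : ∀ k : Fin n, (Xvec B i p).2 k = 1/2 * (B k).mulVec p.1 i := fun k => rfl
  simp only [Dgv, ContinuousLinearMap.add_apply, ContinuousLinearMap.smul_apply,
    ContinuousLinearMap.sum_apply, xco_apply, tco_apply, mvL_apply, smul_eq_mul, D1,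
    hx, ht]
  have e1 : ∑ l, 2 * p.1 l * (if l = i then 1 else 0) = 2 * p.1 i := by
    simp [Finset.sum_ite_eq, mul_ite]
  have e2 : ∀ k, (B k).mulVec (Xvec B i p).1 j = B k j i := by
    intro k
    simp only [Matrix.mulVec, dotProduct, hx, mul_ite, mul_one, mul_zero]
    simp
  have e3 : ∑ k, (p.2 k * (B k).mulVec (Xvec B i p).1 j +
      (B k).mulVec p.1 j * (1/2 * (B k).mulVec p.1 i)) =
      ∑ k, p.2 k * B k j i + 1/2 * ∑ k, (B k).mulVec p.1 i * (B k).mulVec p.1 j := by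
    rw [Finset.sum_add_distrib, Finset.mul_sum]
    congr 1
    · exact Finset.sum_congr rfl fun k _ => by rw [e2]
    · exact Finset.sum_congr rfl fun k _ => by ring
  rw [e3, e1]
  ring

/-- second horizontal derivative of the gauge -/
lemma XXop_hnorm {p : G m n} (hp : p ≠ 0) (i j : Fin m) :
    Xop B i (Xop B j hnorm) p =
      phi p ^ ((4⁻¹ : ℝ) - 1) *
        (sqnorm p.1 * (if j = i then 1 else 0) + 2 * (p.1 i * p.1 j) +
          4 * ∑ k, p.2 k * B k j i + 2 * ∑ k, (B k).mulVec p.1 i * (B k).mulVec p.1 j) +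
      gv B p j * ((((4⁻¹ : ℝ) - 1) * phi p ^ ((4⁻¹ : ℝ) - 1 - 1)) * (4 * gv B p i)) := by
  have hF : HasFDerivAt (fun q => phi q ^ ((4⁻¹ : ℝ) - 1) * gv B q j)
      ((phi p ^ ((4⁻¹ : ℝ) - 1)) • Dgv B p j +
        (gv B p j) • ((((4⁻¹ : ℝ) - 1) * phi p ^ ((4⁻¹ : ℝ) - 1 - 1)) • Dphi p)) p := by
    exact ((hasFDerivAt_phi p).rpow_const (Or.inl (phi_pos hp).ne')).mul (hasFDerivAt_gv B p j)
  have hev : (Xop B j hnorm) =ᶠ[nhds p] (fun q => phi q ^ ((4⁻¹ : ℝ) - 1) * gv B q j) := by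
    filter_upwards [IsOpen.mem_nhds isOpen_compl_singleton
      (by simpa using hp : p ∈ ({0}ᶜ : Set (G m n)))] with q hq
    exact Xop_hnorm B (by simpa using hq) j
  rw [Xop, hev.fderiv_eq, hF.fderiv]
  rw [ContinuousLinearMap.add_apply, ContinuousLinearMap.smul_apply,
    ContinuousLinearMap.smul_apply, ContinuousLinearMap.smul_apply, Dgv_Xvec, Dphi_Xvec,
    smul_eq_mul, smul_eq_mul, smul_eq_mul]


lemma skew_quad {M : Matrix (Fin m) (Fin m) ℝ} (hM : Mᵀ = -M) (x : Fin m → ℝ) :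
    M.mulVec x ⬝ᵥ x = 0 := by
  have h : M.mulVec x ⬝ᵥ x = x ⬝ᵥ M.mulVec x := dotProduct_comm _ _
  rw [Matrix.dotProduct_mulVec, ← Matrix.mulVec_transpose, hM] at h
  have h2 : (-M).mulVec x ⬝ᵥ x = -(M.mulVec x ⬝ᵥ x) := by
    rw [Matrix.neg_mulVec, neg_dotProduct]
  rw [h2] at h
  linarith

lemma sqnorm_eq_dot {k : ℕ} (x : Fin k → ℝ) : sqnorm x = x ⬝ᵥ x := by
  simp [sqnorm, dotProduct, pow_two]

variable {B} in
lemma dot_BB (hB : HTypeData B) (x : Fin m → ℝ) (k l : Fin n) :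
    (B k).mulVec x ⬝ᵥ (B l).mulVec x = if k = l then sqnorm x else 0 := by
  obtain ⟨hskew, horth, hanti⟩ := hB
  rw [Matrix.dotProduct_mulVec, Matrix.vecMul_mulVec]
  by_cases h : k = l
  · subst h
    rw [horth, if_pos rfl, Matrix.vecMul_one]
    exact (sqnorm_eq_dot x).symm
  · rw [if_neg h]
    have hS : ((B k)ᵀ * B l)ᵀ = -((B k)ᵀ * B l) := by
      rw [Matrix.transpose_mul, Matrix.transpose_transpose, hskew l, Matrix.neg_mul,
        hskew k, Matrix.neg_mul, hanti k l h, neg_neg]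
    have h0 := skew_quad hS x
    rw [← Matrix.dotProduct_mulVec, dotProduct_comm]
    exact h0

variable {B} in
lemma dot_Bx (hB : HTypeData B) (x : Fin m → ℝ) (k : Fin n) :
    (B k).mulVec x ⬝ᵥ x = 0 := skew_quad (hB.1 k) x

variable {B} in
lemma sum_gv_sq (hB : HTypeData B) (p : G m n) :
    ∑ j, gv B p j ^ 2 = sqnorm p.1 * phi p := by
  have expand : ∀ j, gv B p j ^ 2 =
      sqnorm p.1 ^ 2 * p.1 j ^ 2 +
        8 * sqnorm p.1 * (p.1 j * ∑ k, p.2 k * (B k).mulVec p.1 j) +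
        16 * (∑ k, p.2 k * (B k).mulVec p.1 j)^2 := by
    intro j; rw [gv]; ring
  rw [Finset.sum_congr rfl fun j _ => expand j]
  rw [Finset.sum_add_distrib, Finset.sum_add_distrib, ← Finset.mul_sum, ← Finset.mul_sum,
    ← Finset.mul_sum]
  have e1 : ∑ j, p.1 j ^ 2 = sqnorm p.1 := rfl
  have e2 : ∑ j, p.1 j * ∑ k, p.2 k * (B k).mulVec p.1 j = 0 := by
    have h : ∀ j, p.1 j * ∑ k, p.2 k * (B k).mulVec p.1 j
        = ∑ k, p.2 k * ((B k).mulVec p.1 j * p.1 j) := by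
      intro j; rw [Finset.mul_sum]; exact Finset.sum_congr rfl fun k _ => by ring
    rw [Finset.sum_congr rfl fun j _ => h j, Finset.sum_comm]
    refine Finset.sum_eq_zero fun k _ => ?_
    rw [← Finset.mul_sum]
    have h2 : ∑ j, (B k).mulVec p.1 j * p.1 j = (B k).mulVec p.1 ⬝ᵥ p.1 := rfl
    rw [h2, dot_Bx hB, mul_zero]
  have e3 : ∑ j, (∑ k, p.2 k * (B k).mulVec p.1 j)^2 = (∑ k, p.2 k ^2) * sqnorm p.1 := by
    have expand2 : ∀ j, (∑ k, p.2 k * (B k).mulVec p.1 j)^2 =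
        ∑ k, ∑ l, (p.2 k * p.2 l) * ((B k).mulVec p.1 j * (B l).mulVec p.1 j) := by
      intro j
      rw [pow_two, Finset.sum_mul_sum]
      exact Finset.sum_congr rfl fun k _ => Finset.sum_congr rfl fun l _ => by ring
    rw [Finset.sum_congr rfl fun j _ => expand2 j, Finset.sum_comm]
    have inner : ∀ k, (∑ j, ∑ l, (p.2 k * p.2 l) * ((B k).mulVec p.1 j * (B l).mulVec p.1 j))
        = p.2 k ^ 2 * sqnorm p.1 := by
      intro k
      rw [Finset.sum_comm]
      have h : ∀ l, ∑ j, (p.2 k * p.2 l) * ((B k).mulVec p.1 j * (B l).mulVec p.1 j)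
          = (p.2 k * p.2 l) * (if k = l then sqnorm p.1 else 0) := by
        intro l
        rw [← Finset.mul_sum]
        congr 1
        exact dot_BB hB p.1 k l
      rw [Finset.sum_congr rfl fun l _ => h l]
      simp [Finset.sum_ite_eq, mul_ite, pow_two]
    rw [Finset.sum_congr rfl fun k _ => inner k, ← Finset.sum_mul]
  rw [e1, e2, e3, phi]
  have e4 : sqnorm p.2 = ∑ k, p.2 k ^ 2 := rfl
  rw [e4]
  ring

variable {B} in
lemma trace_AB_zero {A : Matrix (Fin m) (Fin m) ℝ} (hA : A.IsSymm) (hB : HTypeData B)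
    (k : Fin n) : ∑ i, ∑ j, A i j * B k j i = 0 := by
  have h : ∑ i, ∑ j, A i j * B k j i = (A * B k).trace := by
    rw [Matrix.trace]
    exact Finset.sum_congr rfl fun i _ => by rw [Matrix.diag, Matrix.mul_apply]
  rw [h]
  have h2 : (A * B k).trace = -(A * B k).trace := by
    conv_lhs => rw [← Matrix.trace_transpose, Matrix.transpose_mul, hB.1 k, hA.eq,
      Matrix.neg_mul, Matrix.trace_neg, Matrix.trace_mul_comm]
  linarith

lemma quadForm_expand (A : Matrix (Fin m) (Fin m) ℝ) (x : Fin m → ℝ) :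
    quadForm A x = ∑ i, ∑ j, A i j * (x i * x j) := by
  rw [quadForm, dotProduct]
  refine Finset.sum_congr rfl fun i _ => ?_
  rw [Matrix.mulVec, dotProduct, Finset.sum_mul]
  exact Finset.sum_congr rfl fun j _ => by ring



lemma rpow_f1 {P : ℝ} (hP : 0 < P) :
    (1 / P ^ (4⁻¹:ℝ)) * ((P ^ ((4⁻¹:ℝ)-1))^2 * P) = P ^ ((4⁻¹:ℝ)-1) := by
  rw [one_div, ← Real.rpow_neg hP.le, ← Real.rpow_natCast (P ^ ((4⁻¹:ℝ)-1)) 2,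
    ← Real.rpow_mul hP.le]
  nth_rewrite 3 [show P = P ^ (1:ℝ) by rw [Real.rpow_one]]
  rw [← Real.rpow_add hP, ← Real.rpow_add hP]
  norm_num

lemma rpow_f2 {P : ℝ} (hP : 0 < P) :
    (1 / P ^ (4⁻¹:ℝ)) * (P ^ ((4⁻¹:ℝ)-1))^2 = P ^ ((4⁻¹:ℝ)-1-1) := by
  rw [one_div, ← Real.rpow_neg hP.le, ← Real.rpow_natCast (P ^ ((4⁻¹:ℝ)-1)) 2,
    ← Real.rpow_mul hP.le, ← Real.rpow_add hP]
  norm_num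

lemma rpow_f3 {P : ℝ} (hP : 0 < P) :
    2 / (P ^ (4⁻¹:ℝ))^3 = 2 * P ^ ((4⁻¹:ℝ)-1) := by
  rw [← Real.rpow_natCast (P ^ (4⁻¹:ℝ)) 3, ← Real.rpow_mul hP.le, div_eq_mul_inv,
    ← Real.rpow_neg hP.le]
  norm_num

/-- formula `(Lad)`. For `p = (x,t) ≠ 0`,
`L_A d(p) = (1/d(p))⟨(Tr(A(p))I − 3A(p))∇_H d(p), ∇_H d(p)⟩
  + (2/d(p)³)(⟨A(p)x,x⟩ + Σ_k ⟨A(p)Bᵏx, Bᵏx⟩)`. -/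
theorem Lop_of_homogeneous_norm
    (m n : ℕ) (hm : 1 ≤ m) (hn : 1 ≤ n)
    (B : Fin n → Matrix (Fin m) (Fin m) ℝ) (hB : HTypeData B)
    (A : G m n → Matrix (Fin m) (Fin m) ℝ) (hA : ∀ p, (A p).IsSymm) :
    ∀ p : G m n, p ≠ 0 →
      Lop B A hnorm p =
        (1 / hnorm p) *
          (((A p).trace • (1 : Matrix (Fin m) (Fin m) ℝ) - (3 : ℝ) • A p).mulVec
              (fun j => Xop B j hnorm p) ⬝ᵥ (fun j => Xop B j hnorm p)) +
        (2 / hnorm p ^ 3) *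
          (quadForm (A p) p.1 + ∑ k, quadForm (A p) ((B k).mulVec p.1)) := by
  intro p hp
  have hP : 0 < phi p := phi_pos hp
  set c3 : ℝ := phi p ^ ((4⁻¹:ℝ)-1) with hc3
  set c7 : ℝ := phi p ^ ((4⁻¹:ℝ)-1-1) with hc7
  set s : ℝ := sqnorm p.1 with hs
  set g : Fin m → ℝ := gv B p with hg
  -- the four basic sums
  set S1 : ℝ := ∑ i, ∑ j, A p i j * (g i * g j) with hS1
  set S2 : ℝ := ∑ i, ∑ j, A p i j * (p.1 i * p.1 j) with hS2
  set S3 : ℝ := ∑ k, ∑ i, ∑ j, A p i j * ((B k).mulVec p.1 i * (B k).mulVec p.1 j) with hS3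
  set Tr : ℝ := (A p).trace with hTr
  -- Step 1: LHS
  have key : ∀ i j, A p i j * Xop B i (Xop B j hnorm) p =
      c3 * s * (A p i j * (if j = i then 1 else 0))
      + 2 * c3 * (A p i j * (p.1 i * p.1 j))
      + 4 * c3 * (A p i j * (∑ k, p.2 k * B k j i))
      + 2 * c3 * (A p i j * (∑ k, (B k).mulVec p.1 i * (B k).mulVec p.1 j))
      - 3 * c7 * (A p i j * (g i * g j)) := by
    intro i j
    rw [XXop_hnorm B hp i j, hg, hc3, hc7, hs]
    ring
  have hL : Lop B A hnorm p =
      c3 * s * (∑ i, ∑ j, A p i j * (if j = i then 1 else 0))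
      + 2 * c3 * S2
      + 4 * c3 * (∑ i, ∑ j, A p i j * (∑ k, p.2 k * B k j i))
      + 2 * c3 * (∑ i, ∑ j, A p i j * (∑ k, (B k).mulVec p.1 i * (B k).mulVec p.1 j))
      - 3 * c7 * S1 := by
    rw [Lop, Finset.sum_congr rfl fun i _ => Finset.sum_congr rfl fun j _ => key i j]
    simp only [Finset.sum_add_distrib, Finset.sum_sub_distrib, ← Finset.mul_sum]
    rfl
  have hD : (∑ i, ∑ j, A p i j * (if j = i then 1 else 0)) = Tr := by
    rw [hTr, Matrix.trace]
    refine Finset.sum_congr rfl fun i _ => ?_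
    simp [Matrix.diag, mul_ite, Finset.sum_ite_eq]
  have hST : (∑ i, ∑ j, A p i j * (∑ k, p.2 k * B k j i)) = 0 := by
    have h1 : ∀ i j, A p i j * (∑ k, p.2 k * B k j i) = ∑ k, p.2 k * (A p i j * B k j i) := by
      intro i j; rw [Finset.mul_sum]; exact Finset.sum_congr rfl fun k _ => by ring
    rw [Finset.sum_congr rfl fun i _ => Finset.sum_congr rfl fun j _ => h1 i j]
    rw [Finset.sum_congr rfl fun i (_ : i ∈ Finset.univ) => Finset.sum_comm, Finset.sum_comm]
    refine Finset.sum_eq_zero fun k _ => ?_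
    simp only [← Finset.mul_sum]
    rw [trace_AB_zero (hA p) hB k, mul_zero]
  have hS3' : (∑ i, ∑ j, A p i j * (∑ k, (B k).mulVec p.1 i * (B k).mulVec p.1 j)) = S3 := by
    rw [hS3]
    rw [Finset.sum_congr rfl fun i (_ : i ∈ Finset.univ) =>
      Finset.sum_congr rfl fun j _ => Finset.mul_sum Finset.univ
        (fun k => (B k).mulVec p.1 i * (B k).mulVec p.1 j) (A p i j)]
    rw [Finset.sum_congr rfl fun i (_ : i ∈ Finset.univ) => Finset.sum_comm, Finset.sum_comm]
  rw [hL, hD, hST, hS3']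
  -- Step 2: RHS
  have hXd : ∀ j, Xop B j hnorm p = c3 * g j := fun j => Xop_hnorm B hp j
  have hRHS1 : (((A p).trace • (1 : Matrix (Fin m) (Fin m) ℝ) - (3 : ℝ) • A p).mulVec
      (fun j => Xop B j hnorm p) ⬝ᵥ (fun j => Xop B j hnorm p)) =
      Tr * (c3^2 * (s * phi p)) - 3 * (c3^2 * S1) := by
    have expand : (((A p).trace • (1 : Matrix (Fin m) (Fin m) ℝ) - (3 : ℝ) • A p).mulVec
        (fun j => Xop B j hnorm p) ⬝ᵥ (fun j => Xop B j hnorm p)) =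
        ∑ j, (∑ i, (Tr * (if j = i then 1 else 0) - 3 * A p j i) * (c3 * g i)) * (c3 * g j) := by
      rw [dotProduct]
      refine Finset.sum_congr rfl fun j _ => ?_
      rw [Matrix.mulVec, dotProduct, hXd j]
      congr 1
      refine Finset.sum_congr rfl fun i _ => ?_
      rw [hXd i]
      congr 1
    rw [expand]
    have e1 : ∀ j, (∑ i, (Tr * (if j = i then 1 else 0) - 3 * A p j i) * (c3 * g i)) * (c3 * g j)
        = Tr * (c3^2 * (g j)^2) - 3 * (∑ i, A p j i * (g i * g j)) * c3^2 := by
      intro j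
      have split : ∀ i : Fin m, (Tr * (if j = i then 1 else 0) - 3 * A p j i) * (c3 * g i)
          = (Tr * if j = i then 1 else 0) * (c3 * g i) - 3 * A p j i * (c3 * g i) :=
        fun i => by ring
      rw [Finset.sum_congr rfl fun i _ => split i, Finset.sum_sub_distrib]
      have t1 : ∑ i, (Tr * if j = i then 1 else 0) * (c3 * g i) = Tr * (c3 * g j) := by
        simp [mul_ite, Finset.sum_ite_eq]
      have t2 : ∑ i, 3 * A p j i * (c3 * g i) = 3 * c3 * ∑ i, A p j i * g i := by
        rw [Finset.mul_sum]; exact Finset.sum_congr rfl fun i _ => by ring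
      have t3 : ∑ i, A p j i * (g i * g j) = (∑ i, A p j i * g i) * g j := by
        rw [Finset.sum_mul]; exact Finset.sum_congr rfl fun i _ => by ring
      rw [t1, t2, t3, sub_mul]
      ring
    have e3 : (∑ j, (∑ i, A p j i * (g i * g j))) = S1 := by
      rw [hS1]
      exact Finset.sum_congr rfl fun a _ => Finset.sum_congr rfl fun b _ => by ring
    rw [Finset.sum_congr rfl fun j _ => e1 j, Finset.sum_sub_distrib]
    have t5 : ∑ j, Tr * (c3^2 * (g j)^2) = Tr * (c3^2 * (s * phi p)) := by
      rw [← Finset.mul_sum, ← Finset.mul_sum, hg, sum_gv_sq hB, hs]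
    have t6 : ∑ j, (3 * ∑ i, A p j i * (g i * g j)) * c3^2 = 3 * (c3^2 * S1) := by
      have h6 : ∀ j, (3 * ∑ i, A p j i * (g i * g j)) * c3^2
          = 3 * c3^2 * ∑ i, A p j i * (g i * g j) := fun j => by ring
      rw [Finset.sum_congr rfl fun j _ => h6 j, ← Finset.mul_sum, e3]
      ring
    rw [t5, t6]
  rw [hRHS1, quadForm_expand, ← hS2]
  have hq3 : ∑ k, quadForm (A p) ((B k).mulVec p.1) = S3 := by
    rw [hS3]
    exact Finset.sum_congr rfl fun k _ => quadForm_expand _ _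
  rw [hq3]
  have hh : hnorm p = phi p ^ (4⁻¹:ℝ) := rfl
  have f1 := rpow_f1 hP
  have f2 := rpow_f2 hP
  have f3 := rpow_f3 hP
  rw [← hh, ← hc3] at f1 f3
  rw [← hh, ← hc3, ← hc7] at f2
  linear_combination (-(Tr*s)) * f1 + 3*S1*f2 - (S2+S3)*f3

end
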